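/- Let δ ≥ 1 and k ≥ 2 be integers, and let G be the join of the complete graph K_δ with the empty graph on δ + k vertices (i.e., (δ+k)K_1 + K_δ: δ + k pairwise nonadjacent vertices each adjacent to all vertices of a clique of size δ). Then d(x) + d(y) = 2δ for every pair of nonadjacent vertices x, y of G, and G has no spanning tree with at most k leaves. -/

import Mathlib

open SimpleGraph

/-- The degree of a vertex: the cardinality of its neighborhood. -/
noncomputable def deg {V : Type*} (G : SimpleGraph V) (x : V) : ℕ :=
  (G.neighborSet x).ncard

/-- The number of leaves (vertices of degree 1) of a subgraph. -/
noncomputable def leafCount {V : Type*} {G : SimpleGraph V} (H : G.Subgraph) : ℕ :=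
  {v : H.verts | (H.coe.neighborSet v).ncard = 1}.ncard

/-- `H` is a tree with at most `k` leaves (a `k`-ended tree). -/
def IsEndedTree {V : Type*} {G : SimpleGraph V} (H : G.Subgraph) (k : ℕ) : Prop :=
  H.coe.IsTree ∧ leafCount H ≤ k

/-- `t_k`: the maximum order of a subgraph of `G` that is a tree with at most `k` leaves. -/
noncomputable def treeOrd {V : Type*} (G : SimpleGraph V) (k : ℕ) : ℕ :=
  sSup {m | ∃ H : G.Subgraph, IsEndedTree H k ∧ H.verts.ncard = m}

/-- The number of vertices of a longest path in `G`. -/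
noncomputable def pathOrd {V : Type*} (G : SimpleGraph V) : ℕ :=
  sSup {m | ∃ (u v : V) (p : G.Walk u v), p.IsPath ∧ p.support.length = m}

/-- `s` is an independent set of vertices of `G`. -/
def IsIndep {V : Type*} (G : SimpleGraph V) (s : Set V) : Prop :=
  s.Pairwise fun a b => ¬ G.Adj a b

/-- `σ₃`: the minimum degree sum over independent triples of vertices. -/
noncomputable def sigma3 {V : Type*} (G : SimpleGraph V) : ℕ :=
  sInf {s | ∃ x y z : V, x ≠ y ∧ x ≠ z ∧ y ≠ z ∧
    ¬G.Adj x y ∧ ¬G.Adj x z ∧ ¬G.Adj y z ∧ s = deg G x + deg G y + deg G z}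

theorem part1 (δ k : ℕ) (hδ : 1 ≤ δ) (hk : 2 ≤ k)
    (G : SimpleGraph (Fin δ ⊕ Fin (δ + k)))
    (hG : ∀ u v, G.Adj u v ↔ u ≠ v ∧ (u.isLeft = true ∨ v.isLeft = true)) :
    (∀ x y, x ≠ y → ¬ G.Adj x y → deg G x + deg G y = 2 * δ) := by
  have key : ∀ z : Fin δ ⊕ Fin (δ + k), z.isLeft = false → deg G z = δ := by
    intro z hz
    obtain ⟨b, rfl⟩ : ∃ b, z = Sum.inr b := Sum.isRight_iff.mp (by cases z <;> simp_all)
    have hset : G.neighborSet (Sum.inr b) = Set.range Sum.inl := by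
      ext u
      simp only [mem_neighborSet, hG, Set.mem_range]
      constructor
      · rintro ⟨hne, h | h⟩
        · exact absurd h (by simp)
        · obtain ⟨a, rfl⟩ := Sum.isLeft_iff.mp h
          exact ⟨a, rfl⟩
      · rintro ⟨a, rfl⟩
        exact ⟨by simp, Or.inr rfl⟩
    rw [deg, hset, ← Nat.card_coe_set_eq,
      Nat.card_range_of_injective Sum.inl_injective, Nat.card_eq_fintype_card,
      Fintype.card_fin]
  intro x y hxy hna
  rw [hG] at hna
  push_neg at hna
  obtain ⟨h1, h2⟩ := hna hxy
  rw [key x (by simpa using h1), key y (by simpa using h2)]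
  ring

theorem part2 (δ k : ℕ) (hδ : 1 ≤ δ) (hk : 2 ≤ k)
    (G : SimpleGraph (Fin δ ⊕ Fin (δ + k)))
    (hG : ∀ u v, G.Adj u v ↔ u ≠ v ∧ (u.isLeft = true ∨ v.isLeft = true)) :
    ¬ ∃ H : G.Subgraph, H.IsSpanning ∧ IsEndedTree H k := by
  classical
  rintro ⟨H, hsp, htree, hleaf⟩
  set T := H.coe with hT
  -- basic cardinality
  have huniv : H.verts = Set.univ := Set.eq_univ_of_forall hsp
  have hcardS : Fintype.card H.verts = 2 * δ + k := by
    rw [← Nat.card_eq_fintype_card, Nat.card_coe_set_eq, huniv, Set.ncard_univ,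
      Nat.card_eq_fintype_card, Fintype.card_sum, Fintype.card_fin, Fintype.card_fin]
    omega
  -- degrees as ncard
  have degeq : ∀ v : H.verts, (T.neighborSet v).ncard = T.degree v := by
    intro v
    rw [Set.ncard_eq_toFinset_card', ← T.neighborFinset_def, T.card_neighborFinset_eq_degree]
  -- every vertex has degree ≥ 1
  have hdeg1 : ∀ v : H.verts, 1 ≤ T.degree v := by
    intro v
    obtain ⟨w, hw⟩ := Fintype.exists_ne_of_one_lt_card (by omega) v
    obtain ⟨p⟩ := (htree.isConnected.preconnected v w)
    cases p with
    | nil => exact absurd rfl hw.symm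
    | cons h q => exact (T.degree_pos_iff_exists_adj v).mpr ⟨_, h⟩
  -- leaves
  have hL : (Finset.univ.filter (fun v : H.verts => T.degree v = 1)).card ≤ k := by
    refine le_trans (le_of_eq ?_) hleaf
    rw [leafCount]
    have : {v : H.verts | (T.neighborSet v).ncard = 1} =
        ↑(Finset.univ.filter (fun v : H.verts => T.degree v = 1)) := by
      ext v
      simp only [Set.mem_setOf_eq, Finset.coe_filter, Finset.mem_univ, true_and]
      rw [degeq v]
    rw [show {v : H.verts | (H.coe.neighborSet v).ncard = 1} =
        {v : H.verts | (T.neighborSet v).ncard = 1} from rfl, this, Set.ncard_coe_finset]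
  -- the independent side
  set s : Finset H.verts := Finset.univ.filter (fun v => (v : Fin δ ⊕ Fin (δ + k)).isLeft = false)
    with hs
  have hscard : s.card = δ + k := by
    have hinj : Function.Injective (fun b : Fin (δ + k) => (⟨Sum.inr b, hsp _⟩ : H.verts)) := by
      intro a b hab
      simpa using congrArg Subtype.val hab
    have : s = Finset.univ.image (fun b : Fin (δ + k) => (⟨Sum.inr b, hsp _⟩ : H.verts)) := by
      ext v
      simp only [hs, Finset.mem_filter, Finset.mem_univ, true_and, Finset.mem_image]
      constructor
      · intro hv
        obtain ⟨b, hb⟩ : ∃ b, (v : Fin δ ⊕ Fin (δ + k)) = Sum.inr b := by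
          rcases v with ⟨u | u, hu⟩
          · simp at hv
          · exact ⟨u, rfl⟩
        exact ⟨b, Subtype.ext hb.symm⟩
      · rintro ⟨b, rfl⟩
        rfl
    rw [this, Finset.card_image_of_injective _ hinj, Finset.card_univ, Fintype.card_fin]
  -- lower bound on degree sum over s
  have hlow : 2 * δ + k ≤ ∑ v ∈ s, T.degree v := by
    have e := Finset.sum_filter_add_sum_filter_not s (fun v => T.degree v = 1)
      (fun v => T.degree v)
    have b1 : (s.filter (fun v => T.degree v = 1)).card * 1 ≤
        ∑ v ∈ s.filter (fun v => T.degree v = 1), T.degree v := by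
      simpa using Finset.card_nsmul_le_sum _ _ 1 (fun v hv => hdeg1 v)
    have b2 : (s.filter (fun v => ¬ T.degree v = 1)).card * 2 ≤
        ∑ v ∈ s.filter (fun v => ¬ T.degree v = 1), T.degree v := by
      have hb := Finset.card_nsmul_le_sum (s.filter (fun v => ¬ T.degree v = 1))
        (fun v => T.degree v) 2 (fun v hv => by
        have := hdeg1 v
        have h := (Finset.mem_filter.mp hv).2
        omega)
      rw [smul_eq_mul] at hb
      exact hb
    have h1 : (s.filter (fun v => T.degree v = 1)).card ≤ k :=
      le_trans (Finset.card_le_card (Finset.filter_subset_filter _ (by simp [hs]))) hL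
    have h2 : (s.filter (fun v => T.degree v = 1)).card +
        (s.filter (fun v => ¬ T.degree v = 1)).card = s.card :=
      Finset.card_filter_add_card_filter_not _
    omega
  -- upper bound: degree sum over s ≤ number of edges
  have hup : ∑ v ∈ s, T.degree v ≤ T.edgeFinset.card := by
    have hsig : (s.sigma (fun v => T.neighborFinset v)).card = ∑ v ∈ s, T.degree v := by
      rw [Finset.card_sigma]
      simp [SimpleGraph.card_neighborFinset_eq_degree]
    rw [← hsig]
    refine Finset.card_le_card_of_injOn (fun p => s(p.1, p.2)) ?_ ?_
    · rintro ⟨v, w⟩ hp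
      rw [Finset.mem_coe, Finset.mem_sigma] at hp
      rw [Finset.mem_coe, SimpleGraph.mem_edgeFinset, SimpleGraph.mem_edgeSet]
      exact (SimpleGraph.mem_neighborFinset _ _ _).mp hp.2
    · rintro ⟨v1, w1⟩ hp1 ⟨v2, w2⟩ hp2 hEq
      simp only [Finset.coe_sigma, Set.mem_sigma_iff, Finset.mem_coe] at hp1 hp2
      rw [Sym2.eq_iff] at hEq
      rcases hEq with ⟨rfl, rfl⟩ | ⟨rfl, rfl⟩
      · rfl
      · exfalso
        have hadj : T.Adj v1 w1 := (SimpleGraph.mem_neighborFinset _ _ _).mp hp1.2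
        have hGadj : G.Adj (v1 : Fin δ ⊕ Fin (δ + k)) (w1 : Fin δ ⊕ Fin (δ + k)) :=
          H.coe_adj_sub _ _ hadj
        have h1 := (Finset.mem_filter.mp hp1.1).2
        have h2 := (Finset.mem_filter.mp hp2.1).2
        rcases (hG _ _).mp hGadj with ⟨_, h | h⟩
        · rw [h1] at h; exact Bool.false_ne_true h
        · rw [h2] at h; exact Bool.false_ne_true h
  have hedge : T.edgeFinset.card + 1 = 2 * δ + k := by
    rw [htree.card_edgeFinset, hcardS]
  omega


/-- Let `G = (δ+k)K₁ + K_δ` (the join of a clique of size `δ` with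
`δ + k` independent vertices), `δ ≥ 1`, `k ≥ 2`. Then `d(x) + d(y) = 2δ` for every pair
of nonadjacent vertices, and `G` has no spanning tree with at most `k` leaves. -/
theorem join_example_no_spanning_tree (δ k : ℕ) (hδ : 1 ≤ δ) (hk : 2 ≤ k)
    (G : SimpleGraph (Fin δ ⊕ Fin (δ + k)))
    (hG : ∀ u v, G.Adj u v ↔ u ≠ v ∧ (u.isLeft = true ∨ v.isLeft = true)) :
    (∀ x y, x ≠ y → ¬ G.Adj x y → deg G x + deg G y = 2 * δ) ∧
    ¬ ∃ H : G.Subgraph, H.IsSpanning ∧ IsEndedTree H k := by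
  exact ⟨part1 δ k hδ hk G hG, part2 δ k hδ hk G hG⟩
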